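/- Let q ∈ (0,1), let J ~ Bernoulli(q) and N ~ Poisson(q). Then J precedes N in the convex order: for every convex function φ : ℝ → ℝ, E[φ(J)] ≤ E[φ(N)]. -/

import Mathlib

lemma exp_tsum (x : ℝ) : ∑' n : ℕ, x ^ n / (Nat.factorial n) = Real.exp x := by
  rw [Real.exp_eq_exp_ℝ, NormedSpace.exp_eq_tsum_div]

/-- Bernoulli(q) precedes Poisson(q) in the convex order. -/
theorem stmt9 (q : ℝ) (hq : q ∈ Set.Ioo (0:ℝ) 1)
    (φ : ℝ → ℝ) (hφ : ConvexOn ℝ Set.univ φ)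
    (hsum : Summable fun k : ℕ => Real.exp (-q) * q ^ k / (Nat.factorial k) * φ k) :
    (1 - q) * φ 0 + q * φ 1 ≤
      ∑' k : ℕ, Real.exp (-q) * q ^ k / (Nat.factorial k) * φ k := by
  obtain ⟨hq0, hq1⟩ := hq
  set p : ℕ → ℝ := fun k => Real.exp (-q) * q ^ k / (Nat.factorial k) with hp
  -- pointwise lower bound from convexity: φ 0 + k*(φ 1 - φ 0) ≤ φ k
  have hconv : ∀ k : ℕ, φ 0 + (k : ℝ) * (φ 1 - φ 0) ≤ φ k := by
    intro k
    rcases Nat.eq_zero_or_pos k with rfl | hk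
    · simp
    rcases eq_or_lt_of_le (Nat.succ_le_of_lt hk) with h1 | h2
    · rw [← h1]; push_cast; ring_nf; simp
    · have hk2 : (2 : ℝ) ≤ (k : ℝ) := by exact_mod_cast h2
      have hkpos : (0 : ℝ) < (k : ℝ) := by linarith
      have ha : (0:ℝ) ≤ 1 - 1/(k:ℝ) := by
        rw [sub_nonneg, div_le_one hkpos]; linarith
      have hb : (0:ℝ) ≤ 1/(k:ℝ) := by positivity
      have hab : (1 - 1/(k:ℝ)) + 1/(k:ℝ) = 1 := by ring
      have := hφ.2 (Set.mem_univ (0:ℝ)) (Set.mem_univ ((k:ℝ))) ha hb hab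
      have hx : (1 - 1/(k:ℝ)) • (0:ℝ) + (1/(k:ℝ)) • (k:ℝ) = 1 := by
        rw [smul_eq_mul, smul_eq_mul, mul_zero, zero_add, one_div, inv_mul_cancel₀ (ne_of_gt hkpos)]
      rw [hx] at this
      simp only [smul_eq_mul] at this
      have h2' : (k:ℝ) * φ 1 ≤ (k:ℝ) * ((1 - 1/(k:ℝ)) * φ 0 + 1/(k:ℝ) * φ (k:ℝ)) :=
        mul_le_mul_of_nonneg_left this (le_of_lt hkpos)
      have hkne : (k:ℝ) ≠ 0 := ne_of_gt hkpos
      field_simp at h2'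
      nlinarith
  have hppos : ∀ k, 0 ≤ p k := by
    intro k
    have : (0:ℝ) < Real.exp (-q) := Real.exp_pos _
    positivity
  -- summability of the linear part
  have hsum1 : Summable p := by
    have : p = fun k => Real.exp (-q) * (q ^ k / (Nat.factorial k)) := by
      funext k; simp [hp, mul_div_assoc]
    rw [this]
    exact (Real.summable_pow_div_factorial q).mul_left _
  have hsumk : Summable (fun k : ℕ => (k : ℝ) * q ^ k / (Nat.factorial k)) := by
    rw [← summable_nat_add_iff 1]
    have : (fun n : ℕ => ((n+1 : ℕ) : ℝ) * q ^ (n+1) / (Nat.factorial (n+1)))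
        = fun n : ℕ => q * (q ^ n / (Nat.factorial n)) := by
      funext n
      rw [Nat.factorial_succ]
      push_cast
      have h1 : ((n:ℝ)+1) ≠ 0 := by positivity
      have h2 : ((Nat.factorial n : ℝ)) ≠ 0 := by
        exact_mod_cast Nat.factorial_ne_zero n
      field_simp
      ring
    rw [this]
    exact (Real.summable_pow_div_factorial q).mul_left q
  -- value of the two series
  have htsum1 : ∑' k, p k = 1 := by
    simp only [hp, mul_div_assoc]
    rw [tsum_mul_left, exp_tsum, ← Real.exp_add]
    simp
  have htsumk : ∑' k : ℕ, (k : ℝ) * q ^ k / (Nat.factorial k) = q * Real.exp q := by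
    rw [Summable.tsum_eq_zero_add hsumk]
    have : (fun n : ℕ => ((n:ℝ)+1) * q ^ (n+1) / ((Nat.factorial (n+1)) : ℝ))
        = fun n : ℕ => q * (q ^ n / (Nat.factorial n)) := by
      funext n
      rw [Nat.factorial_succ]
      push_cast
      have h1 : ((n:ℝ)+1) ≠ 0 := by positivity
      have h2 : ((Nat.factorial n : ℝ)) ≠ 0 := by
        exact_mod_cast Nat.factorial_ne_zero n
      field_simp
      ring
    push_cast
    rw [this, tsum_mul_left, exp_tsum]
    simp
  -- the linear lower bound function
  set L : ℕ → ℝ := fun k => p k * (φ 0 + (k : ℝ) * (φ 1 - φ 0)) with hL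
  have hLsum : Summable L := by
    have : L = fun k => (p k * φ 0) +
        (Real.exp (-q) * (φ 1 - φ 0)) * ((k:ℝ) * q ^ k / (Nat.factorial k)) := by
      funext k
      simp only [hL, hp]
      ring
    rw [this]
    exact ((hsum1.mul_right _).add ((hsumk.mul_left _)))
  have hLval : ∑' k, L k = (1 - q) * φ 0 + q * φ 1 := by
    have hrw : L = fun k => (p k * φ 0) +
        (Real.exp (-q) * (φ 1 - φ 0)) * ((k:ℝ) * q ^ k / (Nat.factorial k)) := by
      funext k
      simp only [hL, hp]
      ring
    rw [hrw, Summable.tsum_add (hsum1.mul_right _) (hsumk.mul_left _),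
      tsum_mul_right, tsum_mul_left, htsum1, htsumk]
    have hee : Real.exp (-q) * Real.exp q = 1 := by rw [← Real.exp_add]; simp
    linear_combination (q * (φ 1 - φ 0)) * hee
  calc (1 - q) * φ 0 + q * φ 1 = ∑' k, L k := hLval.symm
    _ ≤ ∑' k, p k * φ k := by
        apply Summable.tsum_le_tsum _ hLsum
        · have : (fun k : ℕ => p k * φ k)
              = fun k : ℕ => Real.exp (-q) * q ^ k / (Nat.factorial k) * φ k := rfl
          rw [this]; exact hsum
        · intro k
          exact mul_le_mul_of_nonneg_left (hconv k) (hppos k)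
    _ = ∑' k : ℕ, Real.exp (-q) * q ^ k / (Nat.factorial k) * φ k := rfl
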